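/- Let E be a complex Hilbert space, d ≥ 1, F : Fin d → E an orthonormal family, and U : E ≃ₗᵢ[ℂ] E a unitary such that U (F i) lies in the linear span of {F j : j ∈ Fin d} for every i. Let α : Fin d → ℂ with ∑ i, ‖α i‖² = 1, set ψ := ∑ i, α i • F i, and define β a := ∑ i, ‖α i‖² * ‖⟪F a, U (F i)⟫‖². Then there exists a unitary V : E ≃ₗᵢ[ℂ] E such that ‖⟪F a, V ψ⟫‖² = β a for every a : Fin d. (This is the core of the paper's Theorem 1, QCAoM ⊆ QCNoM: every family of observed probabilities obtainable in universal quantum theory with Absoluteness of Measurement can be reproduced in universal quantum theory with Non-absoluteness of Measurement, by a unitary V mapping the superposed post-measurement state ψ = ∑ᵢ αᵢ Fᵢ to ∑ₐ √βₐ Fₐ.) -/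

import Mathlib

open scoped ComplexInnerProductSpace

section Aux

variable {E : Type*} [NormedAddCommGroup E] [InnerProductSpace ℂ E]

/-- Norm squared of a linear combination of an orthonormal family. -/
lemma aux_norm_sq_sum {d : ℕ} {F : Fin d → E} (hF : Orthonormal ℂ F)
    (c : Fin d → ℂ) : ‖∑ i, c i • F i‖ ^ 2 = ∑ i, ‖c i‖ ^ 2 := by
  have h := hF.inner_sum c c Finset.univ
  rw [← inner_self_eq_norm_sq (𝕜 := ℂ), h]
  simp_rw [RCLike.conj_mul]
  rw [map_sum]
  norm_num
  refine Finset.sum_congr rfl fun i _ => ?_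
  rw [← Complex.ofReal_pow, Complex.ofReal_re]

/-- Parseval for vectors in the span of a finite orthonormal family. -/
lemma aux_parseval {d : ℕ} {F : Fin d → E} (hF : Orthonormal ℂ F)
    {x : E} (hx : x ∈ Submodule.span ℂ (Set.range F)) :
    ∑ a, ‖(⟪F a, x⟫ : ℂ)‖ ^ 2 = ‖x‖ ^ 2 := by
  rw [Submodule.mem_span_range_iff_exists_fun] at hx
  obtain ⟨c, rfl⟩ := hx
  rw [aux_norm_sq_sum hF]
  refine Finset.sum_congr rfl fun a _ => ?_
  rw [hF.inner_right_fintype]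

/-- Complex version of `reflection_sub`. -/
lemma aux_reflection_sub [CompleteSpace E] {v w : E} (h : ‖v‖ = ‖w‖)
    (hsym : (⟪v, w⟫ : ℂ) = ⟪w, v⟫) :
    Submodule.reflection (ℂ ∙ (v - w))ᗮ v = w := by
  set R : E ≃ₗᵢ[ℂ] E := Submodule.reflection (ℂ ∙ (v - w))ᗮ
  suffices hsuf : R v + R v = w + w by
    apply smul_right_injective E (by norm_num : (2 : ℂ) ≠ 0)
    simpa [two_smul] using hsuf
  have h₁ : R (v - w) = -(v - w) := Submodule.reflection_orthogonalComplement_singleton_eq_neg (v - w)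
  have h₂ : R (v + w) = v + w := by
    apply Submodule.reflection_mem_subspace_eq_self
    rw [Submodule.mem_orthogonal_singleton_iff_inner_left]
    have hv : (⟪v, v⟫ : ℂ) = (‖v‖ : ℂ) ^ 2 := inner_self_eq_norm_sq_to_K v
    have hw : (⟪w, w⟫ : ℂ) = (‖w‖ : ℂ) ^ 2 := inner_self_eq_norm_sq_to_K w
    rw [inner_sub_right, inner_add_left, inner_add_left, hv, hw, hsym, h]
    ring
  convert congr_arg₂ (· + ·) h₂ h₁ using 1
  · simp
  · abel

end Aux

/-- Core of Theorem 1 (QCAoM ⊆ QCNoM): the AoM probabilities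
`β a = ∑ i, ‖α i‖² ‖⟪F a, U (F i)⟫‖²` are reproduced in NoM by some unitary `V`
acting on the pure state `ψ = ∑ i, α i • F i`: `‖⟪F a, V ψ⟫‖² = β a`. -/
theorem stmt_16 {E : Type*} [NormedAddCommGroup E] [InnerProductSpace ℂ E]
    [CompleteSpace E]
    {d : ℕ} (hd : 1 ≤ d) (F : Fin d → E) (hF : Orthonormal ℂ F)
    (U : E ≃ₗᵢ[ℂ] E)
    (hU : ∀ i, U (F i) ∈ Submodule.span ℂ (Set.range F))
    (α : Fin d → ℂ) (hα : ∑ i, ‖α i‖ ^ 2 = 1)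
    (ψ : E) (hψ : ψ = ∑ i, α i • F i)
    (β : Fin d → ℝ)
    (hβ : ∀ a, β a = ∑ i, ‖α i‖ ^ 2 * ‖⟪F a, U (F i)⟫‖ ^ 2) :
    ∃ V : E ≃ₗᵢ[ℂ] E, ∀ a, ‖⟪F a, V ψ⟫‖ ^ 2 = β a := by
  classical
  -- β is nonnegative and sums to 1
  have hβnn : ∀ a, 0 ≤ β a := fun a => by
    rw [hβ a]; exact Finset.sum_nonneg fun i _ => by positivity
  have hβsum : ∑ a, β a = 1 := by
    have : ∑ a, β a = ∑ i, ‖α i‖ ^ 2 * ∑ a, ‖(⟪F a, U (F i)⟫ : ℂ)‖ ^ 2 := by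
      simp_rw [hβ, Finset.mul_sum]
      rw [Finset.sum_comm]
    rw [this]
    have hone : ∀ i, ∑ a, ‖(⟪F a, U (F i)⟫ : ℂ)‖ ^ 2 = 1 := fun i => by
      rw [aux_parseval hF (hU i), U.norm_map, hF.1 i]
      norm_num
    simp_rw [hone, mul_one, hα]
  -- target state
  set φ : E := ∑ a, ((Real.sqrt (β a) : ℝ) : ℂ) • F a with hφ
  have hφnorm : ‖φ‖ ^ 2 = 1 := by
    rw [hφ, aux_norm_sq_sum hF]
    rw [← hβsum]
    refine Finset.sum_congr rfl fun a _ => ?_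
    rw [Complex.norm_real, Real.norm_eq_abs, abs_of_nonneg (Real.sqrt_nonneg _), Real.sq_sqrt (hβnn a)]
  have hψnorm : ‖ψ‖ ^ 2 = 1 := by rw [hψ, aux_norm_sq_sum hF, hα]
  -- phase factor
  set z : ℂ := ⟪ψ, φ⟫ with hz
  set c : ℂ := if z = 0 then 1 else z / ‖z‖ with hc
  have hcnorm : ‖c‖ = 1 := by
    rw [hc]
    split_ifs with h
    · simp
    · rw [norm_div, Complex.norm_real, Real.norm_eq_abs, abs_of_nonneg (norm_nonneg z),
        div_self (norm_ne_zero_iff.2 h)]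
  -- scalar multiplication unitary
  have hc0 : c ≠ 0 := fun h => by simp [h] at hcnorm
  let S : E ≃ₗᵢ[ℂ] E := (LinearEquiv.smulOfNeZero ℂ E c hc0).isometryOfInner
    (fun x y => by
      have hxy : ∀ w : E, (LinearEquiv.smulOfNeZero ℂ E c hc0) w = c • w := fun _ => rfl
      rw [hxy, hxy, inner_smul_left, inner_smul_right, ← mul_assoc,
        ← Complex.normSq_eq_conj_mul_self]
      simp [Complex.normSq_eq_norm_sq, hcnorm])
  have hS : ∀ x, S x = c • x := fun x => rfl
  -- inner of c•ψ with φ is real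
  have hreal : (⟪c • ψ, φ⟫ : ℂ) = ((‖z‖ : ℝ) : ℂ) := by
    rw [inner_smul_left, ← hz, hc]
    split_ifs with h
    · simp [h]
    · have hz0 : (‖z‖ : ℝ) ≠ 0 := norm_ne_zero_iff.2 h
      rw [map_div₀, Complex.conj_ofReal, div_mul_eq_mul_div,
        ← Complex.normSq_eq_conj_mul_self, div_eq_iff (by exact_mod_cast hz0)]
      rw [Complex.normSq_eq_norm_sq]
      push_cast
      ring
  -- reflection sends c•ψ to φ
  have hnorm : ‖c • ψ‖ = ‖φ‖ := by
    have h1 : ‖c • ψ‖ = 1 := by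
      rw [norm_smul, hcnorm, one_mul]
      nlinarith [norm_nonneg ψ]
    have h2 : ‖φ‖ = 1 := by nlinarith [norm_nonneg φ]
    rw [h1, h2]
  have hsym : (⟪c • ψ, φ⟫ : ℂ) = ⟪φ, c • ψ⟫ := by
    have h1 : (⟪φ, c • ψ⟫ : ℂ) = ((‖z‖ : ℝ) : ℂ) := by
      rw [← inner_conj_symm, hreal, Complex.conj_ofReal]
    rw [hreal, h1]
  refine ⟨S.trans (Submodule.reflection (ℂ ∙ (c • ψ - φ))ᗮ), fun a => ?_⟩
  have hVψ : (S.trans (Submodule.reflection (ℂ ∙ (c • ψ - φ))ᗮ)) ψ = φ := by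
    show Submodule.reflection (ℂ ∙ (c • ψ - φ))ᗮ (S ψ) = φ
    rw [hS]
    exact aux_reflection_sub hnorm hsym
  rw [hVψ, hφ, hF.inner_right_fintype]
  rw [Complex.norm_real, Real.norm_eq_abs, abs_of_nonneg (Real.sqrt_nonneg _), Real.sq_sqrt (hβnn a)]
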